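/- Let C₀ > 0 and let w : [1/2,1] → ℝ be twice continuously differentiable with w(1) = 0 and w'(1) = 0. Suppose that (1 − r²)·(w''(r) + (4/r)·w'(r)) + 2·w(r) − w(r)³ = 0 for all r ∈ [1/2,1), and that |w''(r)| ≤ C₀·(1 − r)^{1/2} for all r ∈ [1/2,1]. Then w(r) = 0 for every r ∈ [1 − 1/(100·(1 + C₀³)), 1]. -/

import Mathlib

open Set

/-- Derivative of the model barrier `(1-x)^(p+1) * sqrt (1-x)` for `x < 1`. -/
lemma barrier_hasDerivAt (p : ℕ) {x : ℝ} (hx : x < 1) :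
    HasDerivAt (fun y => (1 - y) ^ (p + 1) * Real.sqrt (1 - y))
      (-((p + 3/2 : ℝ) * (1 - x) ^ p * Real.sqrt (1 - x))) x := by
  have hu : (0:ℝ) < 1 - x := by linarith
  have h1 : HasDerivAt (fun y : ℝ => 1 - y) (-1) x := by
    simpa using (hasDerivAt_id x).const_sub 1
  have h2 : HasDerivAt (fun y : ℝ => (1 - y) ^ (p + 1))
      ((↑(p+1) * (1 - x) ^ p) * (-1)) x := by
    simpa using h1.fun_pow (p + 1)
  have h3 : HasDerivAt (fun y : ℝ => Real.sqrt (1 - y))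
      (1 / (2 * Real.sqrt (1 - x)) * (-1)) x :=
    (Real.hasDerivAt_sqrt hu.ne').comp x h1
  have h4 := h2.fun_mul h3
  refine h4.congr_deriv ?_
  symm
  have hs : Real.sqrt (1 - x) ≠ 0 := by positivity
  have hsq : Real.sqrt (1 - x) * Real.sqrt (1 - x) = 1 - x :=
    Real.mul_self_sqrt hu.le
  have hpow : (1 - x) ^ (p + 1) = (1 - x) ^ p * (Real.sqrt (1 - x) * Real.sqrt (1 - x)) := by
    rw [hsq, pow_succ]
  rw [hpow]
  field_simp
  push_cast
  ring

/-- Gronwall-type decay bound: if `F 1 = 0` and `|F'| ≤ K (1-x)^p √(1-x)` on `(a,1)`,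
then `|F r| ≤ (K/(p+3/2)) (1-r)^(p+1) √(1-r)` on `[a,1]`. -/
lemma decay_aux {a : ℝ} (ha : a < 1) (p : ℕ) {K : ℝ} (hK : 0 ≤ K)
    {F : ℝ → ℝ} (hF : ContinuousOn F (Icc a 1)) (hF1 : F 1 = 0)
    (hd : ∀ x ∈ Ioo a 1, ∃ d, HasDerivAt F d x ∧
      |d| ≤ K * ((1 - x) ^ p * Real.sqrt (1 - x))) :
    ∀ r ∈ Icc a 1, |F r| ≤ (K / (p + 3/2)) * ((1 - r) ^ (p + 1) * Real.sqrt (1 - r)) := by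
  have hp32 : (0:ℝ) < (p:ℝ) + 3/2 := by positivity
  set c : ℝ := K / (p + 3/2) with hc
  have hcK : c * ((p:ℝ) + 3/2) = K := div_mul_cancel₀ K hp32.ne'
  have hc0 : 0 ≤ c := by positivity
  have hBc : Continuous (fun x : ℝ => (1 - x) ^ (p + 1) * Real.sqrt (1 - x)) := by
    apply Continuous.mul (by continuity)
    exact Real.continuous_sqrt.comp (by continuity)
  have key : ∀ s : ℝ, s = 1 ∨ s = -1 →
      ∀ r ∈ Icc a 1, s * F r ≤ c * ((1 - r) ^ (p + 1) * Real.sqrt (1 - r)) := by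
    intro s hs r hr
    have hmono : MonotoneOn
        (fun x => s * F x - c * ((1 - x) ^ (p + 1) * Real.sqrt (1 - x))) (Icc a 1) := by
      apply monotoneOn_of_deriv_nonneg (convex_Icc a 1)
      · exact (continuousOn_const.mul hF).sub (continuousOn_const.mul hBc.continuousOn)
      · rw [interior_Icc]
        intro x hx
        obtain ⟨d, hdF, hdb⟩ := hd x hx
        exact ((hdF.const_mul s).sub
          ((barrier_hasDerivAt p hx.2).const_mul c)).differentiableAt.differentiableWithinAt
      · rw [interior_Icc]
        intro x hx
        obtain ⟨d, hdF, hdb⟩ := hd x hx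
        have hD : HasDerivAt (fun x => s * F x - c * ((1 - x) ^ (p + 1) * Real.sqrt (1 - x)))
            (s * d - c * (-((p + 3/2 : ℝ) * (1 - x) ^ p * Real.sqrt (1 - x)))) x :=
          (hdF.const_mul s).sub ((barrier_hasDerivAt p hx.2).const_mul c)
        rw [hD.deriv]
        have h1 : -|d| ≤ s * d := by
          rcases hs with h | h
          · rw [h, one_mul]; exact neg_abs_le d
          · rw [h]; have := le_abs_self d; nlinarith
        have h2 : c * ((p + 3/2 : ℝ) * (1 - x) ^ p * Real.sqrt (1 - x))
            = K * ((1 - x) ^ p * Real.sqrt (1 - x)) := by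
          rw [← hcK]; ring
        nlinarith [hdb, h1, h2]
    have h1mem : (1:ℝ) ∈ Icc a 1 := ⟨ha.le, le_rfl⟩
    have h := hmono hr h1mem hr.2
    simp only [hF1, mul_zero, sub_self, zero_pow, Real.sqrt_zero] at h
    linarith
  intro r hr
  rw [abs_le]
  constructor
  · have := key (-1) (Or.inr rfl) r hr; linarith
  · have := key 1 (Or.inl rfl) r hr; linarith

set_option maxHeartbeats 1600000 in
/-- Vanishing near r = 1 for solutions of the degenerate elliptic self-similar
equation with vanishing boundary data (part of Section 5). -/
theorem degenerate_elliptic_vanishing (C₀ : ℝ) (hC₀ : 0 < C₀) (w : ℝ → ℝ)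
    (hw : ContDiffOn ℝ 2 w (Icc (1/2 : ℝ) 1))
    (hw1 : w 1 = 0)
    (hw1' : derivWithin w (Icc (1/2 : ℝ) 1) 1 = 0)
    (heq : ∀ r ∈ Ico (1/2 : ℝ) 1,
      (1 - r ^ 2) *
          (derivWithin (derivWithin w (Icc (1/2 : ℝ) 1)) (Icc (1/2 : ℝ) 1) r
            + (4 / r) * derivWithin w (Icc (1/2 : ℝ) 1) r)
        + 2 * w r - (w r) ^ 3 = 0)
    (hbd : ∀ r ∈ Icc (1/2 : ℝ) 1,
      |derivWithin (derivWithin w (Icc (1/2 : ℝ) 1)) (Icc (1/2 : ℝ) 1) r| ≤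
        C₀ * Real.sqrt (1 - r)) :
    ∀ r ∈ Icc (1 - 1 / (100 * (1 + C₀ ^ 3))) 1, w r = 0 := by
  set f := derivWithin w (Icc (1/2 : ℝ) 1) with hfdef
  set g := derivWithin f (Icc (1/2 : ℝ) 1) with hgdef
  set δ : ℝ := 1 / (100 * (1 + C₀ ^ 3)) with hδdef
  set a : ℝ := 1 - δ with hadef
  -- basic numeric facts
  have hδpos : 0 < δ := by rw [hδdef]; positivity
  have hC2 : C₀ ^ 2 ≤ 1 + C₀ ^ 3 := by nlinarith [mul_nonneg (sq_nonneg (C₀ - 1)) hC₀.le, sq_nonneg (C₀ - 1/2)]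
  have hδ1 : δ * (100 * (1 + C₀ ^ 3)) = 1 := by
    rw [hδdef]; field_simp
  have hδle : δ ≤ 1/100 := by nlinarith [hδ1, hδpos, pow_pos hC₀ 3]
  have hCδ : C₀ ^ 2 * δ ≤ 1/100 := by
    nlinarith [mul_le_mul_of_nonneg_right hC2 hδpos.le, hδ1]
  have ha1 : a < 1 := by rw [hadef]; linarith
  have ha12 : (1/2 : ℝ) < a := by rw [hadef]; linarith
  have hsub : Icc a 1 ⊆ Icc (1/2 : ℝ) 1 := Icc_subset_Icc ha12.le le_rfl
  -- regularity
  have hud : UniqueDiffOn ℝ (Icc (1/2 : ℝ) 1) := uniqueDiffOn_Icc (by norm_num)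
  have hwc : ContinuousOn w (Icc (1/2 : ℝ) 1) := hw.continuousOn
  have hwd : DifferentiableOn ℝ w (Icc (1/2 : ℝ) 1) := hw.differentiableOn (by norm_num)
  have hf1 : ContDiffOn ℝ 1 f (Icc (1/2 : ℝ) 1) := hw.derivWithin hud (by norm_num)
  have hfc : ContinuousOn f (Icc (1/2 : ℝ) 1) := hf1.continuousOn
  have hfd : DifferentiableOn ℝ f (Icc (1/2 : ℝ) 1) := hf1.differentiableOn (by norm_num)
  have hf1' : f 1 = 0 := hw1'
  have hg1 : g 1 = 0 := by
    have := hbd 1 ⟨by norm_num, le_rfl⟩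
    rw [sub_self, Real.sqrt_zero, mul_zero] at this
    exact abs_eq_zero.mp (le_antisymm this (abs_nonneg _))
  -- pointwise derivatives on the open interval
  have hDw : ∀ x ∈ Ioo a 1, HasDerivAt w (f x) x := by
    intro x hx
    have hx' : x ∈ Icc (1/2 : ℝ) 1 := hsub (Ioo_subset_Icc_self hx)
    have hnb : Icc (1/2 : ℝ) 1 ∈ nhds x := Icc_mem_nhds (lt_of_le_of_lt ha12.le hx.1) hx.2
    exact ((hwd x hx').hasDerivWithinAt).hasDerivAt hnb
  have hDf : ∀ x ∈ Ioo a 1, HasDerivAt f (g x) x := by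
    intro x hx
    have hx' : x ∈ Icc (1/2 : ℝ) 1 := hsub (Ioo_subset_Icc_self hx)
    have hnb : Icc (1/2 : ℝ) 1 ∈ nhds x := Icc_mem_nhds (lt_of_le_of_lt ha12.le hx.1) hx.2
    exact ((hfd x hx').hasDerivWithinAt).hasDerivAt hnb
  -- main induction
  have key : ∀ n : ℕ, ∀ r ∈ Icc a 1, |g r| ≤ C₀ * (1/2)^n * Real.sqrt (1 - r) := by
    intro n
    induction n with
    | zero => intro r hr; simpa using hbd r (hsub hr)
    | succ n ih =>
      set M : ℝ := C₀ * (1/2)^n with hM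
      have hM0 : 0 < M := by rw [hM]; positivity
      have hMC : M ≤ C₀ := by
        rw [hM]
        nlinarith [pow_le_one₀ (by norm_num : (0:ℝ) ≤ 1/2) (by norm_num : (1/2:ℝ) ≤ 1) (n := n)]
      -- bounds on f and w from ih
      have hfb := decay_aux ha1 0 hM0.le (hfc.mono hsub) hf1'
        (fun x hx => ⟨g x, hDf x hx, by
          simpa using ih x (Ioo_subset_Icc_self hx)⟩)
      have hfb' : ∀ r ∈ Icc a 1, |f r| ≤ (2/3 * M) * ((1 - r) * Real.sqrt (1 - r)) := by
        intro r hr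
        have := hfb r hr
        norm_num at this ⊢
        linarith
      have hwb := decay_aux ha1 1 (by positivity : (0:ℝ) ≤ 2/3 * M) (hwc.mono hsub) hw1
        (fun x hx => ⟨f x, hDw x hx, by
          have := hfb' x (Ioo_subset_Icc_self hx)
          simpa [pow_one] using this⟩)
      have hwb' : ∀ r ∈ Icc a 1, |w r| ≤ (4/15 * M) * ((1 - r)^2 * Real.sqrt (1 - r)) := by
        intro r hr
        have := hwb r hr
        norm_num at this ⊢
        linarith
      intro r hr
      rcases eq_or_lt_of_le hr.2 with h1 | hlt
      · rw [h1, hg1, sub_self, Real.sqrt_zero, mul_zero, abs_zero]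
      · -- use the equation
        have hr' : r ∈ Ico (1/2 : ℝ) 1 := ⟨le_trans ha12.le hr.1, hlt⟩
        have E := heq r hr'
        have hrpos : (0:ℝ) < r := lt_of_lt_of_le (by norm_num) hr'.1
        have hE2 : (1 - r^2) * g r = w r^3 - 2 * w r - (1 - r^2) * ((4/r) * f r) := by
          linear_combination E
        set u : ℝ := 1 - r with hu
        set s : ℝ := Real.sqrt (1 - r) with hs
        have hupos : 0 < u := by rw [hu]; linarith
        have huδ : u ≤ δ := by
          have h := hr.1
          rw [hadef] at h
          rw [hu]; linarith
        have hu1 : u ≤ 1 := by rw [hu]; linarith [hr'.1]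
        have hs0 : 0 ≤ s := Real.sqrt_nonneg _
        have hss : s * s = u := by
          rw [hs, hu]; exact Real.mul_self_sqrt (by linarith)
        have h1r2pos : (0:ℝ) < 1 - r^2 := by nlinarith
        have h1r2a : u ≤ 1 - r^2 := by rw [hu]; nlinarith
        have h1r2b : 1 - r^2 ≤ 2 * u := by rw [hu]; nlinarith
        have h4r : 4 / r ≤ 8 := by rw [div_le_iff₀ hrpos]; linarith [hr'.1]
        have h4r0 : 0 ≤ 4 / r := by positivity
        have hW := hwb' r hr
        have hF := hfb' r hr
        rw [← hu, ← hs] at hW hF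
        -- triangle inequality
        have htri : (1 - r^2) * |g r| ≤ |w r|^3 + 2 * |w r| + (1 - r^2) * ((4/r) * |f r|) := by
          have h1 : (1 - r^2) * |g r| = |(1 - r^2) * g r| := by
            rw [abs_mul, abs_of_pos h1r2pos]
          rw [h1, hE2]
          calc |w r^3 - 2 * w r - (1 - r^2) * ((4/r) * f r)|
              ≤ |w r^3 - 2 * w r| + |(1 - r^2) * ((4/r) * f r)| := abs_sub _ _
            _ ≤ |w r^3| + |2 * w r| + |(1 - r^2) * ((4/r) * f r)| := by
                linarith [abs_sub (w r^3) (2 * w r)]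
            _ = |w r|^3 + 2 * |w r| + (1 - r^2) * ((4/r) * |f r|) := by
                rw [abs_mul, abs_mul, abs_mul, abs_pow, abs_of_pos h1r2pos,
                  abs_of_nonneg h4r0, abs_of_nonneg (by norm_num : (0:ℝ) ≤ 2)]
        -- numeric estimates
        have hW3 : |w r|^3 ≤ (64/3375) * M^3 * (u^7 * s) := by
          have := pow_le_pow_left₀ (abs_nonneg (w r)) hW 3
          calc |w r|^3 ≤ ((4/15 * M) * (u^2 * s))^3 := this
            _ = (64/3375) * M^3 * (u^6 * (s * s) * s) := by ring
            _ = (64/3375) * M^3 * (u^7 * s) := by rw [hss]; ring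
        have hterm3 : (1 - r^2) * ((4/r) * |f r|) ≤ (32/3) * M * (u^2 * s) := by
          have h5 : (4/r) * |f r| ≤ 8 * ((2/3 * M) * (u * s)) :=
            mul_le_mul h4r hF (abs_nonneg _) (by norm_num)
          calc (1 - r^2) * ((4/r) * |f r|) ≤ (2*u) * (8 * ((2/3 * M) * (u * s))) := by
                apply mul_le_mul h1r2b h5 (mul_nonneg h4r0 (abs_nonneg _)) (by positivity)
            _ = (32/3) * M * (u^2 * s) := by ring
        have hsum : (1 - r^2) * |g r| ≤
            ((64/3375) * M^3 * u^6 + (168/15) * M * u) * (u * s) := by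
          calc (1 - r^2) * |g r| ≤ |w r|^3 + 2 * |w r| + (1 - r^2) * ((4/r) * |f r|) := htri
            _ ≤ (64/3375) * M^3 * (u^7 * s) + 2 * ((4/15 * M) * (u^2 * s))
                + (32/3) * M * (u^2 * s) := by linarith [hW3, hterm3, hW]
            _ = ((64/3375) * M^3 * u^6 + (168/15) * M * u) * (u * s) := by ring
        have hcoef : (64/3375) * M^3 * u^6 + (168/15) * M * u ≤ M / 2 := by
          have h6 : u^6 ≤ u := by
            calc u^6 ≤ u^1 := pow_le_pow_of_le_one hupos.le hu1 (by norm_num)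
              _ = u := pow_one u
          have hMu : M^2 * u^6 ≤ C₀^2 * δ :=
            mul_le_mul (pow_le_pow_left₀ hM0.le hMC 2) (h6.trans huδ)
              (pow_nonneg hupos.le 6) (sq_nonneg C₀)
          have ht1 : M^3 * u^6 ≤ M * (1/100) := by
            calc M^3 * u^6 = M * (M^2 * u^6) := by ring
              _ ≤ M * (C₀^2 * δ) := mul_le_mul_of_nonneg_left hMu hM0.le
              _ ≤ M * (1/100) := mul_le_mul_of_nonneg_left hCδ hM0.le
          have ht2 : M * u ≤ M * (1/100) :=
            mul_le_mul_of_nonneg_left (huδ.trans hδle) hM0.le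
          linarith
        have hfinal : u * |g r| ≤ u * ((M/2) * s) := by
          calc u * |g r| ≤ (1 - r^2) * |g r| := by
                apply mul_le_mul_of_nonneg_right h1r2a (abs_nonneg _)
            _ ≤ ((64/3375) * M^3 * u^6 + (168/15) * M * u) * (u * s) := hsum
            _ ≤ (M/2) * (u * s) := by
                apply mul_le_mul_of_nonneg_right hcoef (by positivity)
            _ = u * ((M/2) * s) := by ring
        have := le_of_mul_le_mul_left (by linarith [hfinal] : u * |g r| ≤ u * ((M/2) * s)) hupos
        calc |g r| ≤ (M/2) * s := this
          _ = C₀ * (1/2)^(n+1) * s := by rw [hM]; ring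
  -- pass to the limit
  have hg0 : ∀ r ∈ Icc a 1, g r = 0 := by
    intro r hr
    have h1 : Filter.Tendsto (fun n : ℕ => C₀ * (1/2)^n * Real.sqrt (1 - r))
        Filter.atTop (nhds 0) := by
      have h2 : Filter.Tendsto (fun n : ℕ => ((1:ℝ)/2)^n) Filter.atTop (nhds 0) :=
        tendsto_pow_atTop_nhds_zero_of_lt_one (by norm_num) (by norm_num)
      have := (h2.const_mul C₀).mul_const (Real.sqrt (1 - r))
      simpa using this
    have h2 : |g r| ≤ 0 := ge_of_tendsto' h1 (fun n => key n r hr)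
    exact abs_eq_zero.mp (le_antisymm h2 (abs_nonneg _))
  have hf0 : ∀ r ∈ Icc a 1, f r = 0 := by
    have h := decay_aux ha1 0 (le_refl (0:ℝ)) (hfc.mono hsub) hf1'
      (fun x hx => ⟨g x, hDf x hx, by rw [hg0 x (Ioo_subset_Icc_self hx)]; simp⟩)
    intro r hr
    have h0 : |f r| ≤ 0 := by simpa using h r hr
    exact abs_eq_zero.mp (le_antisymm h0 (abs_nonneg _))
  have hw0 : ∀ r ∈ Icc a 1, w r = 0 := by
    have h := decay_aux ha1 0 (le_refl (0:ℝ)) (hwc.mono hsub) hw1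
      (fun x hx => ⟨f x, hDw x hx, by rw [hf0 x (Ioo_subset_Icc_self hx)]; simp⟩)
    intro r hr
    have h0 : |w r| ≤ 0 := by simpa using h r hr
    exact abs_eq_zero.mp (le_antisymm h0 (abs_nonneg _))
  exact hw0
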